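/- Let F₁ be the standard oriented isotropic flag (span of e₁ inside span of e₁,e₂), F₃ the opposite flag represented by columns (−e₄ direction) as the matrix with columns (0,0,0,1) and (0,0,-1,0), and F₂ = u·F₁ where u = [[1,0,0,0],[a,1,0,0],[b,d,1,0],[c,ad-b,a,1]] ∈ U₋^{>0}. Then the Maslov bilinear form of the three Lagrangians F₁⁽²⁾, F₂⁽²⁾, F₃⁽²⁾ is 2·[[ab-c, b],[b, d]], and this matrix is positive definite; hence the Maslov index of the triple is +1. -/

import Mathlib

open Matrix

noncomputable def OmegaMat : Matrix (Fin 4) (Fin 4) ℝ :=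
  !![0,0,0,1; 0,0,-1,0; 0,1,0,0; -1,0,0,0]

noncomputable def omegaForm (u v : Fin 4 → ℝ) : ℝ := u ⬝ᵥ (OmegaMat.mulVec v)

lemma sigma_apply (σ : (Fin 4 → ℝ) →ₗ[ℝ] (Fin 4 → ℝ))
    (hσ₁ : ∀ u ∈ Submodule.span ℝ {(![1,0,0,0] : Fin 4 → ℝ), ![0,1,0,0]}, σ u = u)
    (hσ₃ : ∀ u ∈ Submodule.span ℝ {(![0,0,1,0] : Fin 4 → ℝ), ![0,0,0,1]}, σ u = -u)
    (x y z w : ℝ) : σ ![x,y,z,w] = ![x,y,-z,-w] := by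
  have hv : (![x,y,z,w] : Fin 4 → ℝ)
      = (x•![1,0,0,0]+y•![0,1,0,0]) + (z•![0,0,1,0]+w•![0,0,0,1]) := by
    funext i; fin_cases i <;> simp
  rw [hv, map_add,
    hσ₁ _ (Submodule.add_mem _ (Submodule.smul_mem _ _ (Submodule.subset_span (by simp)))
      (Submodule.smul_mem _ _ (Submodule.subset_span (by simp)))),
    hσ₃ _ (Submodule.add_mem _ (Submodule.smul_mem _ _ (Submodule.subset_span (by simp)))
      (Submodule.smul_mem _ _ (Submodule.subset_span (by simp))))]
  funext i; fin_cases i <;> simp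

theorem stmt15 (a b c d : ℝ)
    (ha : 0 < a) (hb : 0 < b) (hc : 0 < c) (had : 0 < a*d - b)
    (hdet : 0 < b*(a*d - b) - c*d)
    (σ : (Fin 4 → ℝ) →ₗ[ℝ] (Fin 4 → ℝ))
    (hσ₁ : ∀ u ∈ Submodule.span ℝ {(![1,0,0,0] : Fin 4 → ℝ), ![0,1,0,0]}, σ u = u)
    (hσ₃ : ∀ u ∈ Submodule.span ℝ {(![0,0,1,0] : Fin 4 → ℝ), ![0,0,0,1]}, σ u = -u) :
    (omegaForm ![1,a,b,c] (σ ![1,a,b,c]) = 2*(a*b - c) ∧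
     omegaForm ![1,a,b,c] (σ ![0,1,d,a*d - b]) = 2*b ∧
     omegaForm ![0,1,d,a*d - b] (σ ![1,a,b,c]) = 2*b ∧
     omegaForm ![0,1,d,a*d - b] (σ ![0,1,d,a*d - b]) = 2*d) ∧
    (!![2*(a*b - c), 2*b; 2*b, 2*d]).PosDef := by
  have hd : 0 < d := by nlinarith
  constructor
  · rw [sigma_apply σ hσ₁ hσ₃, sigma_apply σ hσ₁ hσ₃]
    refine ⟨?_, ?_, ?_, ?_⟩ <;>
      · simp [omegaForm, OmegaMat, dotProduct, mulVec, Fin.sum_univ_four, vecHead, vecTail]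
        ring
  · constructor
    · show _ᴴ = _
      ext i j; fin_cases i <;> fin_cases j <;> simp [conjTranspose, transpose, vecHead, vecTail]
    · intro x hx
      have key : (0:ℝ) < 2*(a*b-c)*(x 0)^2 + 4*b*(x 0)*(x 1) + 2*d*(x 1)^2 := by
        rcases eq_or_ne (x 0) 0 with h0 | h0
        · have h1 : x 1 ≠ 0 := by
            intro h1; exact hx (Finsupp.ext fun i => by fin_cases i <;> simp [h0, h1])
          rw [h0]
          nlinarith [mul_pos hd (sq_pos_of_ne_zero h1)]
        · nlinarith [sq_nonneg (d*(x 1) + b*(x 0)),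
            mul_pos hd hdet, sq_pos_of_ne_zero h0, hd]
      simp only [star_trivial]
      have : x ⬝ᵥ (!![2*(a*b - c), 2*b; 2*b, 2*d]).mulVec x
          = 2*(a*b-c)*(x 0)^2 + 4*b*(x 0)*(x 1) + 2*d*(x 1)^2 := by
        simp [dotProduct, mulVec, Fin.sum_univ_two]; ring
      refine key.trans_eq ?_
      simp [Finsupp.sum_fintype, mul_zero, implies_true, Fin.sum_univ_two]; ring
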